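/- With ν̄ = ν + ε·𝟙_{[0,∞)} as above, define ν⁺(z) = ν(z) for z ≥ 0 and ν⁺(z) = −∞ for z < 0, and ν⁻(z) = min(ν(z), ν(0⁻)) (i.e., using only mass strictly left of 0), so that L_ν(x,t) = max(L_{ν⁺}(x,t), L_{ν⁻}(x,t)) for x ≥ 0. Then L_{ν̄}(x,t) = L_ν(x,t) + ε if and only if L_{ν⁺}(x,t) ≥ L_{ν⁻}(x,t). -/
import Mathlib


/-- Characterization of the second-class particle location:
L_{ν̄}(x,t) = L_ν(x,t) + ε if and only if L_{ν⁺}(x,t) ≥ L_{ν⁻}(x,t). -/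
theorem second_class_characterization (ν : ℝ → ℝ) (hν : Monotone ν) (ε : ℝ) (hε : 0 < ε)
    (L : ℝ → ℝ → ℝ → ℝ) (hL : ∀ z x t, 0 ≤ L z x t)
    (x t : ℝ) (hx : 0 ≤ x) (Lp Lm Lν Lb : ℝ)
    (hp : IsLUB {y | ∃ z, 0 ≤ z ∧ z ≤ x ∧ y = ν z + L z x t} Lp)
    (hm : IsLUB {y | ∃ z, z < 0 ∧ y = ν z + L z x t} Lm)
    (hn : IsLUB {y | ∃ z ≤ x, y = ν z + L z x t} Lν)
    (hb : IsLUB {y | ∃ z ≤ x, y = (ν z + if 0 ≤ z then ε else 0) + L z x t} Lb)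
    (hmax : Lν = max Lp Lm) :
    Lb = Lν + ε ↔ Lm ≤ Lp := by
  have key : Lb = max (Lp + ε) Lm := by
    apply hb.unique
    constructor
    · rintro y ⟨z, hzx, rfl⟩
      by_cases hz : 0 ≤ z
      · simp only [if_pos hz]
        have h1 : ν z + L z x t ≤ Lp := hp.1 ⟨z, hz, hzx, rfl⟩
        calc ν z + ε + L z x t = (ν z + L z x t) + ε := by ring
          _ ≤ Lp + ε := by linarith
          _ ≤ max (Lp + ε) Lm := le_max_left _ _
      · simp only [if_neg hz]
        have h1 : ν z + L z x t ≤ Lm := hm.1 ⟨z, lt_of_not_ge hz, rfl⟩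
        calc ν z + 0 + L z x t = ν z + L z x t := by ring
          _ ≤ Lm := h1
          _ ≤ max (Lp + ε) Lm := le_max_right _ _
    · intro u hu
      have h1 : Lp + ε ≤ u := by
        have : Lp ≤ u - ε := by
          apply hp.2
          rintro y ⟨z, hz0, hzx, rfl⟩
          have : (ν z + if 0 ≤ z then ε else 0) + L z x t ≤ u := hu ⟨z, hzx, rfl⟩
          rw [if_pos hz0] at this
          linarith
        linarith
      have h2 : Lm ≤ u := by
        apply hm.2
        rintro y ⟨z, hz0, rfl⟩
        have : (ν z + if 0 ≤ z then ε else 0) + L z x t ≤ u :=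
          hu ⟨z, le_trans hz0.le hx, rfl⟩
        rw [if_neg (not_le.mpr hz0)] at this
        linarith
      exact max_le h1 h2
  subst hmax
  rw [key]
  constructor
  · intro h
    by_contra hlt
    push_neg at hlt
    have h2 : max (Lp + ε) Lm < Lm + ε := max_lt (by linarith) (by linarith)
    rw [max_eq_right hlt.le] at h
    rw [h] at h2
    exact lt_irrefl _ h2
  · intro h
    have h1 : Lm ≤ Lp + ε := by linarith
    rw [max_eq_left h, max_eq_left h1]
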